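/- For every integer k ≥ 1, f(k) ≤ k − √k + 2 (as an inequality of real numbers, where f(k) is coerced to ℝ). -/
import Mathlib


/-- Fuel-based helper for the recursive function `f`. For `k ≤ fuel`, `faux fuel k`
computes the value of `f k`. -/
def faux : ℕ → ℕ → ℕ
  | 0, _ => 1
  | fuel + 1, k =>
    if k ≤ 2 then 1
    else if k ≤ 4 then 2
    else
      min (faux fuel (k - 1) + 1)
        (((List.range k).filter (fun k1 => 3 ≤ k1 ∧ k1 ∣ k)).foldr
          (fun k1 acc => min (k - k1 - k / k1 + 1 + max (faux fuel k1) (k / k1)) acc)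
          (faux fuel (k - 1) + 1))

/-- `f 1 = 1`, `f 2 = 1`, `f 3 = 2`, `f 4 = 2`, and for `k > 4`,
`f k = min (f (k-1) + 1)
          (min over factorizations k = k₁·k₂ with 3 ≤ k₁ < k, 2 ≤ k₂ of
             k₁·k₂ - k₁ - k₂ + 1 + max (f k₁) k₂)`,
where the inner minimum is omitted when no such factorization exists.
(Note: for a divisor `k₁` of `k` with `3 ≤ k₁ < k`, the cofactor `k₂ = k / k₁`
automatically satisfies `k₂ ≥ 2`.) -/
def f (k : ℕ) : ℕ := faux k k

lemma foldr_min_congr (F G : ℕ → ℕ) (l : List ℕ) (a : ℕ)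
    (h : ∀ x ∈ l, F x = G x) :
    l.foldr (fun k1 acc => min (F k1) acc) a = l.foldr (fun k1 acc => min (G k1) acc) a := by
  induction l with
  | nil => rfl
  | cons x xs ih =>
    simp only [List.foldr_cons]
    rw [h x (by simp), ih (fun y hy => h y (by simp [hy]))]

lemma foldr_min_le (F : ℕ → ℕ) (l : List ℕ) (a x : ℕ) (hx : x ∈ l) :
    l.foldr (fun k1 acc => min (F k1) acc) a ≤ F x := by
  induction l with
  | nil => cases hx
  | cons y ys ih =>
    rcases List.mem_cons.mp hx with rfl | h
    · exact min_le_left _ _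
    · exact le_trans (min_le_right _ _) (ih h)

lemma faux_irrel : ∀ k m n, k ≤ m → k ≤ n → faux m k = faux n k := by
  intro k
  induction k using Nat.strong_induction_on with
  | _ k ih =>
    intro m n hm hn
    match m, n with
    | 0, 0 => rfl
    | 0, n + 1 =>
      have : k = 0 := by omega
      subst this; simp [faux]
    | m + 1, 0 =>
      have : k = 0 := by omega
      subst this; simp [faux]
    | m + 1, n + 1 =>
      by_cases h2 : k ≤ 2
      · simp [faux, h2]
      by_cases h4 : k ≤ 4
      · simp [faux, h2, h4]
      · have h1 : faux m (k - 1) = faux n (k - 1) :=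
          ih (k - 1) (by omega) m n (by omega) (by omega)
        show faux (m + 1) k = faux (n + 1) k
        simp only [faux, if_neg h2, if_neg h4]
        rw [h1]
        congr 1
        apply foldr_min_congr
          (F := fun k1 => k - k1 - k / k1 + 1 + max (faux m k1) (k / k1))
          (G := fun k1 => k - k1 - k / k1 + 1 + max (faux n k1) (k / k1))
        intro x hx
        have hx' : x < k := by
          have := List.mem_range.mp (List.mem_filter.mp hx).1
          exact this
        rw [ih x hx' m n (by omega) (by omega)]

lemma f_succ_le (k : ℕ) : f (k + 1) ≤ f k + 1 := by
  by_cases h4 : k + 1 ≤ 4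
  · have e0 : f 0 = 1 := rfl
    have e1 : f 1 = 1 := rfl
    have e2 : f 2 = 1 := rfl
    have e3 : f 3 = 2 := rfl
    have e4 : f 4 = 2 := rfl
    have hk3 : k ≤ 3 := by omega
    interval_cases k <;> simp only [Nat.reduceAdd] <;> omega
  · have h2 : ¬ (k + 1 ≤ 2) := by omega
    show faux (k + 1) (k + 1) ≤ f k + 1
    simp only [faux, if_neg h2, if_neg h4]
    exact le_trans (min_le_left _ _) (by simp [f])

lemma f_chain (a t : ℕ) : f (a + t) ≤ f a + t := by
  induction t with
  | zero => simp
  | succ n ih =>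
    calc f (a + n + 1) ≤ f (a + n) + 1 := f_succ_le _
      _ ≤ f a + n + 1 := by omega

lemma f_le_chain {a b : ℕ} (h : a ≤ b) : f b ≤ f a + (b - a) := by
  have := f_chain a (b - a)
  rwa [Nat.add_sub_cancel' h] at this

lemma f_le_self {k : ℕ} (h : 1 ≤ k) : f k ≤ k := by
  have := f_le_chain h
  have h1 : f 1 = 1 := by decide
  omega

lemma f_div_bound {k d : ℕ} (hk : 4 < k) (hd3 : 3 ≤ d) (hdk : d < k) (hdvd : d ∣ k) :
    f k ≤ k - d - k / d + 1 + max (f d) (k / d) := by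
  obtain ⟨m, rfl⟩ : ∃ m, k = m + 1 := ⟨k - 1, by omega⟩
  have h2 : ¬ (m + 1 ≤ 2) := by omega
  have h4 : ¬ (m + 1 ≤ 4) := by omega
  show faux (m + 1) (m + 1) ≤ _
  simp only [faux, if_neg h2, if_neg h4]
  refine le_trans (min_le_right _ _) ?_
  have hmem : d ∈ (List.range (m + 1)).filter (fun k1 => 3 ≤ k1 ∧ k1 ∣ (m + 1)) := by
    refine List.mem_filter.mpr ⟨List.mem_range.mpr hdk, ?_⟩
    simp [hd3, hdvd]
  refine le_trans (foldr_min_le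
    (fun k1 => m + 1 - k1 - (m + 1) / k1 + 1 + max (faux m k1) ((m + 1) / k1)) _ _ d hmem) ?_
  have heq : faux m d = f d := faux_irrel d m d (by omega) le_rfl
  show m + 1 - d - (m + 1) / d + 1 + max (faux m d) ((m + 1) / d) ≤
    m + 1 - d - (m + 1) / d + 1 + max (f d) ((m + 1) / d)
  rw [heq]

lemma main_nat (k : ℕ) (hk : 1 ≤ k) : f k + Nat.sqrt k ≤ k + 1 := by
  by_cases hsmall : k ≤ 8
  · rcases Nat.eq_or_lt_of_le hk with h1 | h1
    · have e1 : f 1 = 1 := rfl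
      rw [← h1]
      simp [e1, Nat.sqrt_one]
    · have e2 : f 2 = 1 := rfl
      have hs2 : Nat.sqrt k ≤ 2 := by
        have := Nat.sqrt_lt.mpr (show k < 3 * 3 by omega)
        omega
      have := f_le_chain (show 2 ≤ k by omega)
      omega
  · have hs3 : 3 ≤ Nat.sqrt k := by
      have h9 : (3 : ℕ) * 3 ≤ k := by omega
      exact Nat.le_sqrt.mpr h9
    set s := Nat.sqrt k with hs
    have hmk : s * s ≤ k := Nat.sqrt_le k
    have h2s : 2 * s ≤ s * s := by nlinarith
    have hsltm : s < s * s := by nlinarith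
    have h4m : 4 < s * s := by nlinarith
    have hq : s * s / s = s := Nat.mul_div_cancel_left s (by omega)
    have h1 : f (s * s) ≤ s * s - s - s * s / s + 1 + max (f s) (s * s / s) :=
      f_div_bound h4m hs3 hsltm ⟨s, rfl⟩
    rw [hq, max_eq_right (f_le_self (by omega))] at h1
    have h3 : f k ≤ f (s * s) + (k - s * s) := f_le_chain hmk
    have : f (s * s) ≤ s * s - s + 1 := by omega
    omega

/-- For every integer `k ≥ 1`, `f k ≤ k - √k + 2` as real numbers. This is the
exponent bound underlying the corollary that `k`-SUM can be solved in
`Õ(n^{k - √k + 2})` time and `O(n)` space by a Las Vegas algorithm. -/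
theorem stmt_10 (k : ℕ) (hk : 1 ≤ k) :
    (f k : ℝ) ≤ (k : ℝ) - Real.sqrt k + 2 := by
  have h := main_nat k hk
  have hsqrt : Real.sqrt k ≤ (Nat.sqrt k : ℝ) + 1 := Real.real_sqrt_le_nat_sqrt_succ
  have hcast : (f k : ℝ) + (Nat.sqrt k : ℝ) ≤ (k : ℝ) + 1 := by exact_mod_cast h
  linarith
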